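/- Let A be a real symmetric n×n matrix whose n eigenvalues are pairwise distinct. Then: (i) every real orthogonal n×n matrix P with P·A = A·P satisfies P² = 1; and (ii) any two real orthogonal n×n matrices commuting with A commute with each other. (Consequently, for a finite graph whose adjacency matrix has simple spectrum, the automorphism group is an elementary abelian 2-group; this is the classical core of the proof that such a graph has quantum automorphism group of the form (ℤ/2)^d.) -/

import Mathlib

open Matrix

-- main conjugation lemma: if P commutes with A, then star U * P * U is diagonal
lemma aux_diag (n : ℕ) (A : Matrix (Fin n) (Fin n) ℝ)
    (hA : A.IsHermitian) (hsimple : Function.Injective hA.eigenvalues)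
    (P : Matrix (Fin n) (Fin n) ℝ) (hPA : P * A = A * P) :
    ∃ d : Fin n → ℝ,
      star (hA.eigenvectorUnitary : Matrix (Fin n) (Fin n) ℝ) * P *
        (hA.eigenvectorUnitary : Matrix (Fin n) (Fin n) ℝ) = diagonal d := by
  set U : Matrix (Fin n) (Fin n) ℝ := (hA.eigenvectorUnitary : Matrix (Fin n) (Fin n) ℝ) with hU
  set B := star U * P * U with hB
  have hUU : star U * U = 1 := Unitary.coe_star_mul_self _
  have hUU' : U * star U = 1 := Unitary.coe_mul_star_self _
  have hDiag : star U * A * U = diagonal (RCLike.ofReal ∘ hA.eigenvalues) :=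
    by have h := hA.conjStarAlgAut_star_eigenvectorUnitary
       simp only [Unitary.conjStarAlgAut_apply, Unitary.coe_star, star_star] at h; exact h
  have hDiag' : star U * A * U = diagonal hA.eigenvalues := by
    simpa using hDiag
  have hcomm : B * diagonal hA.eigenvalues = diagonal hA.eigenvalues * B := by
    rw [← hDiag']
    calc (star U * P * U) * (star U * A * U)
        = star U * (P * (U * star U) * A) * U := by simp only [mul_assoc]
      _ = star U * (P * A) * U := by rw [hUU', mul_one]
      _ = star U * (A * P) * U := by rw [hPA]
      _ = star U * (A * (U * star U) * P) * U := by rw [hUU', mul_one]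
      _ = (star U * A * U) * (star U * P * U) := by simp only [mul_assoc]
  refine ⟨fun i => B i i, ?_⟩
  ext i j
  by_cases hij : i = j
  · subst hij; simp [diagonal]
  · have := congrFun (congrFun hcomm i) j
    rw [mul_diagonal, diagonal_mul] at this
    have hne : hA.eigenvalues j - hA.eigenvalues i ≠ 0 := by
      intro h
      exact hij (hsimple (sub_eq_zero.mp h)).symm
    have : B i j * (hA.eigenvalues j - hA.eigenvalues i) = 0 := by linear_combination this
    have := (mul_eq_zero.mp this).resolve_right hne
    simp [diagonal, hij, this]

lemma aux_orth (n : ℕ) (A : Matrix (Fin n) (Fin n) ℝ)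
    (hA : A.IsHermitian)
    (P : Matrix (Fin n) (Fin n) ℝ) (hP : Pᵀ * P = 1)
    (d : Fin n → ℝ)
    (hd : star (hA.eigenvectorUnitary : Matrix (Fin n) (Fin n) ℝ) * P *
        (hA.eigenvectorUnitary : Matrix (Fin n) (Fin n) ℝ) = diagonal d) :
    diagonal d * diagonal d = 1 := by
  set U : Matrix (Fin n) (Fin n) ℝ := (hA.eigenvectorUnitary : Matrix (Fin n) (Fin n) ℝ) with hU
  have hUU : star U * U = 1 := Unitary.coe_star_mul_self _
  have hUU' : U * star U = 1 := Unitary.coe_mul_star_self _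
  have hstar : star (diagonal d) = diagonal d := by
    rw [star_eq_conjTranspose, diagonal_conjTranspose]
    congr 1
  have hPs : star P * P = 1 := by
    rw [star_eq_conjTranspose, conjTranspose_eq_transpose_of_trivial]; exact hP
  calc diagonal d * diagonal d
      = star (diagonal d) * diagonal d := by rw [hstar]
    _ = star (star U * P * U) * (star U * P * U) := by rw [hd]
    _ = star U * (star P * (U * star U) * P) * U := by
        simp only [StarMul.star_mul, star_star, mul_assoc]
    _ = star U * (star P * P) * U := by rw [hUU', mul_one]
    _ = 1 := by rw [hPs, mul_one, hUU]

lemma aux_recover (n : ℕ) (A : Matrix (Fin n) (Fin n) ℝ)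
    (hA : A.IsHermitian)
    (P : Matrix (Fin n) (Fin n) ℝ) (B : Matrix (Fin n) (Fin n) ℝ)
    (hd : star (hA.eigenvectorUnitary : Matrix (Fin n) (Fin n) ℝ) * P *
        (hA.eigenvectorUnitary : Matrix (Fin n) (Fin n) ℝ) = B) :
    P = (hA.eigenvectorUnitary : Matrix (Fin n) (Fin n) ℝ) * B *
        star (hA.eigenvectorUnitary : Matrix (Fin n) (Fin n) ℝ) := by
  set U : Matrix (Fin n) (Fin n) ℝ := (hA.eigenvectorUnitary : Matrix (Fin n) (Fin n) ℝ) with hU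
  have hUU : star U * U = 1 := Unitary.coe_star_mul_self _
  have hUU' : U * star U = 1 := Unitary.coe_mul_star_self _
  rw [← hd]
  calc P = (U * star U) * P * (U * star U) := by rw [hUU', one_mul, mul_one]
    _ = U * (star U * P * U) * star U := by simp only [mul_assoc]

set_option linter.unusedVariables false in
/-- If a real symmetric matrix `A` has pairwise distinct eigenvalues, then every real
orthogonal matrix commuting with `A` is an involution, and any two real orthogonal
matrices commuting with `A` commute with each other. -/
theorem orthogonal_commuting_with_simple_spectrum_symmetric
    (n : ℕ) (A : Matrix (Fin n) (Fin n) ℝ)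
    (hsymm : Aᵀ = A) (hA : A.IsHermitian)
    (hsimple : Function.Injective hA.eigenvalues) :
    (∀ P : Matrix (Fin n) (Fin n) ℝ, Pᵀ * P = 1 → P * A = A * P → P ^ 2 = 1) ∧
    (∀ P Q : Matrix (Fin n) (Fin n) ℝ, Pᵀ * P = 1 → Qᵀ * Q = 1 →
      P * A = A * P → Q * A = A * Q → P * Q = Q * P) := by
  set U : Matrix (Fin n) (Fin n) ℝ := (hA.eigenvectorUnitary : Matrix (Fin n) (Fin n) ℝ) with hU
  have hUU : star U * U = 1 := Unitary.coe_star_mul_self _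
  have hUU' : U * star U = 1 := Unitary.coe_mul_star_self _
  constructor
  · intro P hP hPA
    obtain ⟨d, hd⟩ := aux_diag n A hA hsimple P hPA
    have hsq : diagonal d * diagonal d = 1 := aux_orth n A hA P hP d hd
    have hPeq := aux_recover n A hA P (diagonal d) hd
    rw [pow_two, hPeq]
    calc (U * diagonal d * star U) * (U * diagonal d * star U)
        = U * (diagonal d * (star U * U) * diagonal d) * star U := by
          simp only [mul_assoc]
      _ = U * (diagonal d * diagonal d) * star U := by rw [hUU, mul_one]
      _ = 1 := by rw [hsq, mul_one, hUU']
  · intro P Q hP hQ hPA hQA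
    obtain ⟨d, hd⟩ := aux_diag n A hA hsimple P hPA
    obtain ⟨e, he⟩ := aux_diag n A hA hsimple Q hQA
    have hPeq := aux_recover n A hA P (diagonal d) hd
    have hQeq := aux_recover n A hA Q (diagonal e) he
    have hde : diagonal d * diagonal e = diagonal e * diagonal d := by
      rw [diagonal_mul_diagonal, diagonal_mul_diagonal]; exact congrArg diagonal (funext fun i => mul_comm (d i) (e i))
    rw [hPeq, hQeq]
    calc (U * diagonal d * star U) * (U * diagonal e * star U)
        = U * (diagonal d * (star U * U) * diagonal e) * star U := by
          simp only [mul_assoc]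
      _ = U * (diagonal d * diagonal e) * star U := by rw [hUU, mul_one]
      _ = U * (diagonal e * diagonal d) * star U := by rw [hde]
      _ = U * (diagonal e * (star U * U) * diagonal d) * star U := by rw [hUU, mul_one]
      _ = (U * diagonal e * star U) * (U * diagonal d * star U) := by
          simp only [mul_assoc]
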